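/- Let X be a Hausdorff topological space admitting a family 𝓔 of entourages of cardinality κ ≥ ω, closed under finite unions, such that for every x ∈ X and every set C ⊆ X accumulating at x and for every entourage B in some fixed entourage base 𝓑 for X, there exists E ∈ 𝓔 with E ⊆ B and E[x] ∩ C infinite and E[x] contained in any prescribed neighborhood of x (i.e., (𝓔, 𝓑) is an 𝖺𝗌*-netbase for X). Then for every subset A ⊆ X the closure of A has cardinality at most 2^{|A|·κ}. -/

import Mathlib

universe u

open UniformSpace in
/-- If a Hausdorff space `X` admits an `𝖺𝗌*`-netbase `(𝓔, 𝓑)` where `𝓔` has infinite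
cardinality `κ` and is closed under finite unions, then the closure of every subset
`A ⊆ X` has cardinality at most `2 ^ (|A| * κ)`. -/
theorem stmt_18 {X : Type u} [TopologicalSpace X] [T2Space X] (κ : Cardinal.{u})
    (hκ : Cardinal.aleph0 ≤ κ) (𝓑 𝓔 : Set (Set (X × X)))
    (hBrefl : ∀ B ∈ 𝓑, SetRel.id ⊆ B)
    (hBdir : ∀ B₁ ∈ 𝓑, ∀ B₂ ∈ 𝓑, ∃ B₃ ∈ 𝓑, B₃ ⊆ B₁ ∩ B₂)
    (hBbase : ∀ x : X, (∀ B ∈ 𝓑, ball x B ∈ nhds x) ∧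
      ∀ O ∈ nhds x, ∃ B ∈ 𝓑, ball x B ⊆ O)
    (hcard : Cardinal.mk 𝓔 = κ)
    (hunion : ∀ E₁ ∈ 𝓔, ∀ E₂ ∈ 𝓔, E₁ ∪ E₂ ∈ 𝓔)
    (hnet : ∀ B ∈ 𝓑, ∀ x : X, ∀ O ∈ nhds x, ∀ C : Set X,
      (∀ V ∈ nhds x, (V ∩ C).Infinite) →
      ∃ E ∈ 𝓔, E ⊆ B ∧ x ∈ ball x E ∧ ball x E ⊆ O ∧ (ball x E ∩ C).Infinite) :
    ∀ A : Set X, Cardinal.mk (closure A) ≤ 2 ^ (Cardinal.mk A * κ) := by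
  intro A
  rcases A.eq_empty_or_nonempty with rfl | hA
  · simp
  have hA1 : (1 : Cardinal) ≤ Cardinal.mk A :=
    Cardinal.one_le_iff_ne_zero.2 (Cardinal.mk_ne_zero_iff.2 hA.to_subtype)
  have hexp : Cardinal.aleph0 ≤ Cardinal.mk A * κ :=
    hκ.trans (le_mul_of_one_le_left κ.zero_le hA1)
  have htarget : Cardinal.aleph0 ≤ 2 ^ (Cardinal.mk A * κ) :=
    hexp.trans (Cardinal.cantor _).le
  set D : Set X := {x | x ∈ closure A ∧ ∀ V ∈ nhds x, (V ∩ A).Infinite} with hDdef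
  have hsub : closure A ⊆ A ∪ D := by
    intro x hx
    by_cases h : ∀ V ∈ nhds x, (V ∩ A).Infinite
    · exact Or.inr ⟨hx, h⟩
    · push_neg at h
      obtain ⟨V, hV, hfin⟩ := h
      left
      have hxc : x ∈ closure (V ∩ A) := by
        rw [mem_closure_iff_nhds] at hx ⊢
        intro W hW
        obtain ⟨y, ⟨hyW, hyV⟩, hyA⟩ := hx (W ∩ V) (Filter.inter_mem hW hV)
        exact ⟨y, hyW, hyV, hyA⟩
      exact (hfin.isClosed.closure_subset hxc).2
  -- the key injection
  have hDle : Cardinal.mk D ≤ 2 ^ (Cardinal.mk A * κ) := by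
    have hinj : Function.Injective
        (fun (x : D) (E : 𝓔) => {a : A | (a : X) ∈ ball (x : X) (E : Set (X × X))}) := by
      intro x y hxy
      by_contra hne
      have hne' : (x : X) ≠ (y : X) := fun h => hne (Subtype.ext h)
      obtain ⟨Ox, Oy, hOx, hOy, hxOx, hyOy, hdisj⟩ := t2_separation hne'
      obtain ⟨B, hB, hballB⟩ := (hBbase (y : X)).2 Oy (hOy.mem_nhds hyOy)
      obtain ⟨E, hE𝓔, hEB, -, hballO, hinf⟩ :=
        hnet B hB (x : X) Ox (hOx.mem_nhds hxOx) A x.2.2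
      obtain ⟨a, haball, haA⟩ := hinf.nonempty
      have h1 : (⟨a, haA⟩ : A) ∈ {a : A | (a : X) ∈ ball (x : X) E} := haball
      have h2 : (⟨a, haA⟩ : A) ∈ {a : A | (a : X) ∈ ball (y : X) E} := by
        have h3 := congrFun hxy ⟨E, hE𝓔⟩
        simp only at h3
        rw [← h3]
        exact h1
      have haOy : a ∈ Oy := hballB (Set.preimage_mono hEB h2)
      have haOx : a ∈ Ox := hballO haball
      exact hdisj.ne_of_mem haOx haOy rfl
    calc Cardinal.mk D ≤ Cardinal.mk (𝓔 → Set A) := Cardinal.mk_le_of_injective hinj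
      _ = Cardinal.mk (Set A) ^ Cardinal.mk 𝓔 := (Cardinal.power_def _ _).symm
      _ = (2 ^ Cardinal.mk A) ^ κ := by rw [Cardinal.mk_set, hcard]
      _ = 2 ^ (Cardinal.mk A * κ) := (Cardinal.power_mul (a := 2) (b := Cardinal.mk A) (c := κ)).symm
  have hAle : Cardinal.mk A ≤ 2 ^ (Cardinal.mk A * κ) :=
    ((Cardinal.cantor _).le.trans
      (Cardinal.power_le_power_left two_ne_zero
        (le_mul_of_one_le_right (Cardinal.mk A).zero_le (Cardinal.one_le_aleph0.trans hκ))))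
  calc Cardinal.mk (closure A) ≤ Cardinal.mk (↥(A ∪ D)) := Cardinal.mk_le_mk_of_subset hsub
    _ ≤ Cardinal.mk A + Cardinal.mk D := Cardinal.mk_union_le A D
    _ ≤ 2 ^ (Cardinal.mk A * κ) := Cardinal.add_le_of_le htarget hAle hDle
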